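/- If R/J(R) is an abelian π-regular ring, then R is feckly clean. -/

import Mathlib

def IsMaxTwoSided {R : Type*} [Ring R] (P : TwoSidedIdeal R) : Prop :=
  P ≠ ⊤ ∧ ∀ Q : TwoSidedIdeal R, P < Q → Q = ⊤

def InJac {R : Type*} [Ring R] (x : R) : Prop := x ∈ Ideal.jacobson (⊥ : Ideal R)

def IsFullElem {R : Type*} [Ring R] (u : R) : Prop := TwoSidedIdeal.span ({u} : Set R) = ⊤

def FecklyCleanElem {R : Type*} [Ring R] (a : R) : Prop :=
  ∃ e u : R, a = e + u ∧ IsFullElem u ∧ ∀ r : R, InJac (e * r * (1 - e))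

def FecklyCleanRing (R : Type*) [Ring R] : Prop := ∀ a : R, FecklyCleanElem a

theorem stmt11 {R : Type*} [Ring R] (J : TwoSidedIdeal R)
    (hJ : ∀ x : R, x ∈ J ↔ InJac x)
    (hab : ∀ e : J.ringCon.Quotient, e * e = e → ∀ x : J.ringCon.Quotient, e * x = x * e)
    (hpi : ∀ a : J.ringCon.Quotient, ∃ n : ℕ, 1 ≤ n ∧
      ∃ s : J.ringCon.Quotient, a ^ n = a ^ n * s * a ^ n) :
    FecklyCleanRing R := by
  intro a
  set Q := J.ringCon.Quotient with hQ
  let π : R →+* Q := J.ringCon.mk'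
  have hπ : ∀ x : R, π x = (x : Q) := fun _ => rfl
  have hker : ∀ x : R, π x = 0 → x ∈ J := by
    intro x hx
    have h0 : (x : Q) = ((0 : R) : Q) := by simpa [hπ] using hx
    have := (RingCon.eq _).mp h0
    rwa [J.rel_iff, sub_zero] at this
  have hsurj : ∀ q : Q, ∃ x : R, π x = q := by
    intro q
    obtain ⟨x, hx⟩ := Quot.exists_rep q
    exact ⟨x, hx⟩
  obtain ⟨n, hn, s, hs⟩ := hpi (π a)
  obtain ⟨m, rfl⟩ : ∃ m, n = m + 1 := ⟨n - 1, by omega⟩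
  set b : Q := π a with hb
  set E : Q := b ^ (m + 1) * s with hEdef
  have hE : E * E = E := by
    show b ^ (m + 1) * s * (b ^ (m + 1) * s) = b ^ (m + 1) * s
    rw [← mul_assoc, ← hs]
  have hc : ∀ x : Q, E * x = x * E := hab E hE
  have hEb : E * b ^ (m + 1) = b ^ (m + 1) := hs.symm
  have hbE : b ^ (m + 1) * E = b ^ (m + 1) := by rw [← hc]; exact hEb
  -- right inverse computation in Q
  set S : Q := ∑ i ∈ Finset.range (m + 1), b ^ i with hS
  have T1 : (b - 1 + E) * (b ^ m * s * E) = E := by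
    have h2 : b * (b ^ m * s * E) = E * E := by
      rw [mul_assoc (b^m) s E, ← mul_assoc b (b^m), ← pow_succ', hEdef, ← mul_assoc]
    have h3 : (E - 1) * (b ^ m * s * E) = 0 := by
      have : (E - 1) * (b ^ m * s * E) = b ^ m * s * E * (E - 1) := by
        rw [sub_mul, mul_sub, hc, one_mul, mul_one]
      rw [this, mul_sub, mul_assoc, hE, mul_one, sub_self]
    calc (b - 1 + E) * (b ^ m * s * E)
        = b * (b ^ m * s * E) + (E - 1) * (b ^ m * s * E) := by noncomm_ring
      _ = E * E + 0 := by rw [h2, h3]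
      _ = E := by rw [hE, add_zero]
  have T2 : (b - 1 + E) * (S * (1 - E)) = E - 1 := by
    have h4 : E * (S * (1 - E)) = 0 := by
      rw [← mul_assoc, hc, mul_assoc, mul_one_sub, hE, sub_self, mul_zero]
    have h5 : (b - 1) * (S * (1 - E)) = (b ^ (m + 1) - 1) * (1 - E) := by
      rw [← mul_assoc, mul_geom_sum]
    calc (b - 1 + E) * (S * (1 - E))
        = (b - 1) * (S * (1 - E)) + E * (S * (1 - E)) := by rw [add_mul]
      _ = (b ^ (m + 1) - 1) * (1 - E) + 0 := by rw [h4, h5]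
      _ = b ^ (m + 1) - b ^ (m + 1) * E - 1 + E := by
          simp only [sub_mul, mul_sub, one_mul, mul_one, add_zero]; abel
      _ = E - 1 := by rw [hbE]; abel
  have key : (b - 1 + E) * (b ^ m * s * E - S * (1 - E)) = 1 := by
    rw [mul_sub, T1, T2]; abel
  -- lift to R
  obtain ⟨e0, he0⟩ := hsurj (1 - E)
  obtain ⟨r0, hr0⟩ := hsurj (b ^ m * s * E - S * (1 - E))
  refine ⟨e0, a - e0, by abel, ?_, ?_⟩
  · -- fullness of u = a - e0
    have hu : π (a - e0) = b - 1 + E := by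
      rw [map_sub, he0, ← hb]; abel
    have hur : π ((a - e0) * r0) = 1 := by rw [map_mul, hu, hr0, key]
    have hjmem : (1 : R) - (a - e0) * r0 ∈ J := by
      apply hker
      rw [map_sub, map_one, hur, sub_self]
    have hjac : InJac ((1 : R) - (a - e0) * r0) := (hJ _).mp hjmem
    obtain ⟨z, hz⟩ := Ideal.mem_jacobson_iff.mp hjac (-1)
    rw [Ideal.mem_bot] at hz
    have hz1 : z * ((a - e0) * r0) = 1 := by
      rw [mul_neg_one, neg_mul, mul_one_sub, neg_sub] at hz
      rw [sub_add_cancel] at hz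
      exact sub_eq_zero.mp hz
    refine TwoSidedIdeal.eq_top _ ?_
    rw [← hz1]
    exact TwoSidedIdeal.mul_mem_left _ _ _
      (TwoSidedIdeal.mul_mem_right _ _ _ (TwoSidedIdeal.subset_span rfl))
  · -- radical condition
    intro r
    refine (hJ _).mp (hker _ ?_)
    rw [map_mul, map_mul, map_sub, map_one, he0]
    have h1 : (1 - E) * π r = π r * (1 - E) := by
      rw [one_sub_mul, mul_one_sub, hc]
    rw [h1, mul_assoc]
    have h2 : (1 - E) * (1 - (1 - E)) = 0 := by
      rw [sub_sub_cancel, one_sub_mul, hE, sub_self]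
    rw [h2, mul_zero]
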